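/- Let V be a finite-dimensional F-vector space and let Q̃ : (F×V)* → F be a quadratic form. Then the following are equivalent: (a) the β-image of the translation group of V is contained in O'((F×V)*, Q̃), where the β-image of the translation x ↦ x + t is the map (a₀,a*) ↦ (a₀ − ⟨a*,t⟩, a*); (b) one of the following holds: (i) Q̃(1,0*) = 0 and the radical of the polar form of Q̃ equals F·(1,0*), or (ii) dim (F×V)* = 1, or (iii) dim (F×V)* = 2, Q̃(1,0*) ≠ 0, the radical of the polar form of Q̃ is {0}, and |F| = 2. -/

import Mathlib

set_option maxHeartbeats 1000000


/-! Setting: a field `F` and a finite-dimensional `F`-vector space `V`. The dual of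
`F × V` is identified with `F × V*` via the pairing `⟨(a₀,a*),(x₀,x)⟩ = a₀x₀ + ⟨a*,x⟩`.
For a quadratic form `Q`, its polar form is `QuadraticMap.polar Q` (the bilinear map
`Q.polarBilin`) and its radical is `LinearMap.ker Q.polarBilin`. -/

variable {F V : Type*} [Field F] [AddCommGroup V] [Module F V] [FiniteDimensional F V]

/-- The dual linear representation `β` of `AGL(V)` on `(F×V)* = F × V*`: for the affinity
`γ : x ↦ t + g x` (with `g ∈ GL(V)`, `t ∈ V`),
`γ^β (a₀, a*) = (a₀ - ⟨a* ∘ g⁻¹, t⟩, a* ∘ g⁻¹)`. -/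
def betaMap (g : V ≃ₗ[F] V) (t : V) :
    (F × Module.Dual F V) →ₗ[F] (F × Module.Dual F V) :=
  LinearMap.prod
    (LinearMap.fst F F (Module.Dual F V) -
      (Module.Dual.eval F V (g.symm t)).comp (LinearMap.snd F F (Module.Dual F V)))
    ((g.symm.toLinearMap.dualMap).comp (LinearMap.snd F F (Module.Dual F V)))

/-- Given a quadratic form `Q` on `V` whose induced map `D = Q.polarBilin` is bijective
(given here as the linear equivalence `e` with `↑e = Q.polarBilin`), the quadratic form
`Q^↑ : F × V* → F, (a₀, a*) ↦ Q (D⁻¹ a*)`. -/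
def qUp (Q : QuadraticForm F V) (e : V ≃ₗ[F] Module.Dual F V) :
    QuadraticForm F (F × Module.Dual F V) :=
  Q.comp (e.symm.toLinearMap ∘ₗ LinearMap.snd F F (Module.Dual F V))

/-- Given a quadratic form `Q̃` on `F × V*` such that `π ∘ D̃ ∘ π^T : V* → V` is invertible
(given here as the linear equivalence `T`, characterised by
`∀ a b, b (T a) = polar Q̃ (0,a) (0,b)`), the quadratic form
`Q̃^↓ : V → F, x ↦ Q̃ (0, T⁻¹ x)`. -/
def qDown (Qt : QuadraticForm F (F × Module.Dual F V)) (T : Module.Dual F V ≃ₗ[F] V) :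
    QuadraticForm F V :=
  Qt.comp ((LinearMap.inr F F (Module.Dual F V)) ∘ₗ T.symm.toLinearMap)

/-- The weak orthogonal group `O'(W,Q)` of a metric vector space, as a set of linear
endomorphisms: bijective isometries fixing the radical elementwise. -/
def wOrth {W : Type*} [AddCommGroup W] [Module F W] (Qt : QuadraticForm F W) :
    Set (W →ₗ[F] W) :=
  {φ | Function.Bijective φ ∧ (∀ w, Qt (φ w) = Qt w) ∧
    ∀ w ∈ LinearMap.ker Qt.polarBilin, φ w = w}

/-- The `β`-image `AO(V,Q)^β` of the motion group of `(V,Q)`. -/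
def motionBetaSet (Q : QuadraticForm F V) :
    Set ((F × Module.Dual F V) →ₗ[F] (F × Module.Dual F V)) :=
  {φ | ∃ (g : V ≃ₗ[F] V) (t : V), (∀ x, Q (g x) = Q x) ∧ φ = betaMap g t}

/-- The `β`-image `AO'(V,Q)^β` of the weak motion group of `(V,Q)`. -/
def wMotionBetaSet (Q : QuadraticForm F V) :
    Set ((F × Module.Dual F V) →ₗ[F] (F × Module.Dual F V)) :=
  {φ | ∃ (g : V ≃ₗ[F] V) (t : V), (∀ x, Q (g x) = Q x) ∧
    (∀ x ∈ LinearMap.ker Q.polarBilin, g x = x) ∧ φ = betaMap g t}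

set_option linter.unusedSectionVars false in
lemma beta_apply' (t : V) (w : F × Module.Dual F V) :
    betaMap (LinearEquiv.refl F V) t w
      = w - (w.2 t) • ((1:F), (0:Module.Dual F V)) := by
  simp [betaMap, Prod.ext_iff]

set_option linter.unusedSectionVars false in
lemma qexp (Qt : QuadraticForm F (F × Module.Dual F V)) (w e : F × Module.Dual F V) (s : F) :
    Qt (w - s • e) = Qt w + s^2 * Qt e - s * QuadraticMap.polar Qt w e := by
  have h : Qt (w + (-s) • e) = Qt w + Qt ((-s) • e) + QuadraticMap.polar Qt w ((-s) • e) := by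
    rw [QuadraticMap.polar]; ring
  rw [sub_eq_add_neg, show -(s • e) = (-s) • e from (neg_smul s e).symm, h,
    QuadraticMap.map_smul, QuadraticMap.polar_smul_right, smul_eq_mul, smul_eq_mul]
  ring


open QuadraticMap in
/-- Corollary 5.8: the `β`-image of the translation group of `V` (the translation
`x ↦ x + t` having `β`-image `betaMap 1 t : (a₀,a*) ↦ (a₀ - ⟨a*,t⟩, a*)`) is contained in
`O'((F×V)*, Q̃)` iff (i) `Q̃ (1,0*) = 0` and the radical of the polar form of `Q̃` is
`F·(1,0*)`, or (ii) `dim (F×V)* = 1`, or (iii) `dim (F×V)* = 2`, `Q̃ (1,0*) ≠ 0`, the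
radical of the polar form of `Q̃` is `{0}`, and `|F| = 2`. -/
theorem stmt15 (Qt : QuadraticForm F (F × Module.Dual F V)) :
    (∀ t : V, betaMap (LinearEquiv.refl F V) t ∈ wOrth Qt) ↔
      ((Qt (1, 0) = 0 ∧ LinearMap.ker Qt.polarBilin =
          Submodule.span F {((1 : F), (0 : Module.Dual F V))}) ∨
        Module.finrank F (F × Module.Dual F V) = 1 ∨
        (Module.finrank F (F × Module.Dual F V) = 2 ∧ Qt (1, 0) ≠ 0 ∧
          LinearMap.ker Qt.polarBilin = ⊥ ∧ Cardinal.mk F = 2)) := by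
  classical
  set e₀ : F × Module.Dual F V := ((1:F), (0:Module.Dual F V)) with he₀def
  have he0ne : e₀ ≠ 0 := by simp [he₀def, Prod.ext_iff]
  have hspan : ∀ w : F × Module.Dual F V, w ∈ Submodule.span F {e₀} ↔ w.2 = 0 := by
    intro w
    rw [Submodule.mem_span_singleton]
    constructor
    · rintro ⟨a, rfl⟩; simp [he₀def]
    · intro h
      refine ⟨w.1, ?_⟩
      ext
      · simp [he₀def]
      · simp [he₀def, h]
  have hrad : ∀ w, w ∈ LinearMap.ker Qt.polarBilin ↔ ∀ y, polar Qt w y = 0 := by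
    intro w
    simp [LinearMap.mem_ker, LinearMap.ext_iff]
  have hbij : ∀ t : V, Function.Bijective (betaMap (LinearEquiv.refl F V) t) := by
    intro t
    refine Function.bijective_iff_has_inverse.mpr
      ⟨betaMap (LinearEquiv.refl F V) (-t), fun w => ?_, fun w => ?_⟩ <;>
    · simp only [beta_apply', Prod.ext_iff, Prod.snd_sub, Prod.fst_sub, Prod.smul_snd,
        Prod.smul_fst, smul_eq_mul, mul_one, smul_zero, sub_zero, _root_.map_neg]
      constructor <;> first | ring | rfl | trivial
  have hfr : Module.finrank F (F × Module.Dual F V)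
      = 1 + Module.finrank F (Module.Dual F V) := by
    rw [Module.finrank_prod, Module.finrank_self]
  have hmem : (∀ t, betaMap (LinearEquiv.refl F V) t ∈ wOrth Qt) ↔
      ((∀ (w : F × Module.Dual F V) (t : V), Qt (w - w.2 t • e₀) = Qt w) ∧
       ∀ w ∈ LinearMap.ker Qt.polarBilin, w.2 = 0) := by
    constructor
    · intro h
      refine ⟨fun w t => ?_, fun w hw => ?_⟩
      · have := (h t).2.1 w; rwa [beta_apply'] at this
      · ext t
        have h2 := (h t).2.2 w hw
        rw [beta_apply'] at h2
        have h3 : (w.2 t) • e₀ = 0 := sub_eq_self.mp h2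
        rcases smul_eq_zero.mp h3 with h4 | h4
        · simpa using h4
        · exact absurd h4 he0ne
    · rintro ⟨h1, h2⟩ t
      exact ⟨hbij t, fun w => by rw [beta_apply']; exact h1 w t, fun w hw => by
        rw [beta_apply', h2 w hw]; simp⟩
  have hradeq : (∀ w, polar Qt w e₀ = 0) → (∀ w ∈ LinearMap.ker Qt.polarBilin, w.2 = 0) →
      LinearMap.ker Qt.polarBilin = Submodule.span F {e₀} := by
    intro hp h2
    apply le_antisymm
    · intro w hw; exact (hspan w).mpr (h2 w hw)
    · rw [Submodule.span_le, Set.singleton_subset_iff]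
      exact (hrad e₀).mpr (fun y => by rw [QuadraticMap.polar_comm]; exact hp y)
  have hcasei : Qt e₀ = 0 → LinearMap.ker Qt.polarBilin = Submodule.span F {e₀} →
      ((∀ (w : F × Module.Dual F V) (t : V), Qt (w - w.2 t • e₀) = Qt w) ∧
       ∀ w ∈ LinearMap.ker Qt.polarBilin, w.2 = 0) := by
    intro hc hk
    have he₀mem : e₀ ∈ LinearMap.ker Qt.polarBilin := hk ▸ Submodule.mem_span_singleton_self e₀
    have hp : ∀ w, polar Qt w e₀ = 0 := fun w => by
      rw [QuadraticMap.polar_comm]; exact (hrad e₀).mp he₀mem w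
    exact ⟨fun w t => by rw [qexp, hp, hc]; ring,
      fun w hw => (hspan w).mp (hk ▸ hw)⟩
  rw [hmem]
  by_cases hV : Subsingleton V
  · have hDsub : Subsingleton (Module.Dual F V) :=
      ⟨fun f g => by ext v; rw [Subsingleton.elim v 0]; simp⟩
    refine iff_of_true ⟨fun w t => ?_, fun w hw => Subsingleton.elim _ _⟩
      (Or.inr (Or.inl ?_))
    · have ht : w.2 t = 0 := by rw [Subsingleton.elim t (0:V)]; simp
      rw [ht]; simp
    · rw [hfr, Module.finrank_zero_of_subsingleton]
  have hNV : Nontrivial V := not_subsingleton_iff_nontrivial.mp hV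
  have hexf : ∃ f : Module.Dual F V, f ≠ 0 := by
    obtain ⟨v, hv⟩ := exists_ne (0 : V)
    obtain ⟨f, hf⟩ : ∃ f : Module.Dual F V, f v ≠ 0 := by
      simpa [not_forall] using (Module.forall_dual_apply_eq_zero_iff F v).not.mpr hv
    exact ⟨f, fun h => hf (by rw [h]; rfl)⟩
  have hsurj : ∀ f : Module.Dual F V, f ≠ 0 → ∀ s : F, ∃ t, f t = s := by
    intro f hf s
    obtain ⟨t0, ht0⟩ : ∃ t0, f t0 ≠ 0 := by
      by_contra h; push_neg at h; exact hf (by ext t; simp [h t])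
    exact ⟨(s / f t0) • t0, by rw [map_smul, smul_eq_mul, div_mul_cancel₀ s ht0]⟩
  have hfinpos : 0 < Module.finrank F (Module.Dual F V) := by
    obtain ⟨f, hf⟩ := hexf
    have : Nontrivial (Module.Dual F V) := nontrivial_of_ne f 0 hf
    exact Module.finrank_pos
  have hfrne1 : Module.finrank F (F × Module.Dual F V) ≠ 1 := by omega
  have hext : (∀ w : F × Module.Dual F V, w.2 ≠ 0 → polar Qt w e₀ = 0) →
      ∀ w, polar Qt w e₀ = 0 := by
    intro h w
    by_cases hw : w.2 = 0
    · obtain ⟨f, hf⟩ := hexf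
      have hwf : (w + ((0:F), f)).2 ≠ 0 := by simpa [hw]
      have h1 := h _ hwf
      have h2 := h ((0:F), f) (by simpa)
      have h3 := QuadraticMap.polar_add_left Qt w ((0:F), f) e₀
      rw [h1, h2] at h3
      linear_combination -h3
    · exact h w hw
  have hP : (∀ (w : F × Module.Dual F V) (t : V), Qt (w - w.2 t • e₀) = Qt w) ↔
      (∀ (w : F × Module.Dual F V) (s : F), w.2 ≠ 0 →
        s^2 * Qt e₀ = s * polar Qt w e₀) := by
    constructor
    · intro h w s hw
      obtain ⟨t, ht⟩ := hsurj w.2 hw s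
      have h1 := h w t
      rw [qexp, ht] at h1
      linear_combination h1
    · intro h w t
      rw [qexp]
      by_cases hw : w.2 = 0
      · rw [hw]; simp
      · have := h w (w.2 t) hw; linear_combination this
  rw [hP]
  by_cases hF : ∀ u : F, u = 0 ∨ u = 1
  · -- |F| = 2
    have h11 : (1:F) + 1 = 0 := by
      rcases hF (1+1) with h | h
      · exact h
      · exact absurd (by linear_combination h : (1:F) = 0) one_ne_zero
    have hP2 : (∀ (w : F × Module.Dual F V) (s : F), w.2 ≠ 0 →
          s^2 * Qt e₀ = s * polar Qt w e₀) ↔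
        (∀ w : F × Module.Dual F V, w.2 ≠ 0 → Qt e₀ = polar Qt w e₀) := by
      constructor
      · intro h w hw; have := h w 1 hw; simpa using this
      · intro h w s hw
        rcases hF s with rfl | rfl
        · simp
        · simpa using h w hw
    rw [hP2]
    by_cases hD : ∃ f g : Module.Dual F V, f ≠ 0 ∧ g ≠ 0 ∧ f ≠ g
    · obtain ⟨f, g, hf, hg, hfg⟩ := hD
      constructor
      · rintro ⟨h1, h2⟩
        left
        have hm1 : (-1 : F) = 1 := by linear_combination -h11
        have hfg0 : f + g ≠ 0 := by
          intro h
          apply hfg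
          calc f = -g := eq_neg_of_add_eq_zero_left h
          _ = (-1 : F) • g := (neg_one_smul F g).symm
          _ = g := by rw [hm1, one_smul]
        have hc1 := h1 ((0:F), f) (by simpa)
        have hc2 := h1 ((0:F), g) (by simpa)
        have hc3 := h1 ((0:F), f + g) (by simpa using hfg0)
        have hadd : polar Qt ((0:F), f + g) e₀
            = polar Qt ((0:F), f) e₀ + polar Qt ((0:F), g) e₀ := by
          have heq : ((0:F), f + g) = ((0:F), f) + ((0:F), g) := by simp
          rw [heq, QuadraticMap.polar_add_left]
        have hc0 : Qt e₀ = 0 := by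
          rw [hadd, ← hc1, ← hc2] at hc3
          linear_combination -hc3
        refine ⟨hc0, hradeq (hext fun w hw => by rw [← h1 w hw, hc0]) h2⟩
      · rintro (⟨hc, hk⟩ | h1 | ⟨h2, _, _, _⟩)
        · obtain ⟨ha, hb⟩ := hcasei hc hk
          exact ⟨hP2.mp (hP.mp ha), hb⟩
        · exact absurd h1 hfrne1
        · exfalso
          have hd1 : Module.finrank F (Module.Dual F V) = 1 := by omega
          obtain ⟨h0, hh0, hall⟩ := finrank_eq_one_iff'.mp hd1
          obtain ⟨a, ha⟩ := hall f
          obtain ⟨b, hb⟩ := hall g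
          rcases hF a with rfl | rfl
          · exact hf (by rw [← ha, zero_smul])
          · rcases hF b with rfl | rfl
            · exact hg (by rw [← hb, zero_smul])
            · exact hfg (by rw [← ha, ← hb])
    · -- dual has exactly one nonzero element
      push_neg at hD
      obtain ⟨f, hf⟩ := hexf
      have hall : ∀ g : Module.Dual F V, g = 0 ∨ g = f := by
        intro g
        by_cases hg : g = 0
        · exact Or.inl hg
        · exact Or.inr (hD g f hg hf)
      have hps : polar Qt e₀ e₀ = 0 := by
        rw [QuadraticMap.polar_self, two_nsmul]
        calc Qt e₀ + Qt e₀ = (1+1) * Qt e₀ := by ring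
        _ = 0 := by rw [h11, zero_mul]
      have hpff : polar Qt ((0:F), f) ((0:F), f) = 0 := by
        rw [QuadraticMap.polar_self, two_nsmul]
        calc Qt ((0:F), f) + Qt ((0:F), f) = (1+1) * Qt ((0:F), f) := by ring
        _ = 0 := by rw [h11, zero_mul]
      have hdecomp : ∀ w : F × Module.Dual F V, w = w.1 • e₀ + ((0:F), w.2) := by
        intro w; simp [he₀def, Prod.ext_iff]
      have hpolar_left : ∀ w y : F × Module.Dual F V,
          polar Qt w y = w.1 • polar Qt e₀ y + polar Qt ((0:F), w.2) y := by
        intro w y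
        conv_lhs => rw [hdecomp w]
        rw [QuadraticMap.polar_add_left, QuadraticMap.polar_smul_left]
      have hzz : ((0:F), (0:Module.Dual F V)) = (0 : F × Module.Dual F V) := rfl
      have hL : (∀ w : F × Module.Dual F V, w.2 ≠ 0 → Qt e₀ = polar Qt w e₀) ↔
          polar Qt ((0:F), f) e₀ = Qt e₀ := by
        constructor
        · intro h; exact (h ((0:F), f) (by simpa)).symm
        · intro h w hw
          rcases hall w.2 with h0 | h0
          · exact absurd h0 hw
          · rw [hpolar_left w e₀, hps, smul_zero, zero_add, h0, h]
      have hradmem : ∀ w, w ∈ LinearMap.ker Qt.polarBilin ↔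
          (polar Qt w e₀ = 0 ∧ polar Qt w ((0:F), f) = 0) := by
        intro w
        rw [hrad]
        constructor
        · intro h; exact ⟨h e₀, h ((0:F), f)⟩
        · rintro ⟨ha, hb⟩ y
          conv_lhs => rw [hdecomp y]
          rw [QuadraticMap.polar_add_right, QuadraticMap.polar_smul_right]
          rcases hall y.2 with h0 | h0 <;> rw [h0]
          · rw [hzz, QuadraticMap.polar_zero_right, ha]; simp
          · rw [ha, hb]; simp
      constructor
      · rintro ⟨h1, h2⟩
        have hdc := hL.mp h1
        by_cases hc0 : Qt e₀ = 0
        · left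
          refine ⟨hc0, hradeq ?_ h2⟩
          intro w
          rw [hpolar_left w e₀, hps, smul_zero, zero_add]
          rcases hall w.2 with h0 | h0 <;> rw [h0]
          · rw [hzz, QuadraticMap.polar_zero_left]
          · rw [hdc, hc0]
        · right; right
          have hd1 : Module.finrank F (Module.Dual F V) = 1 :=
            finrank_eq_one_iff'.mpr ⟨f, hf, fun g => by
              rcases hall g with h0 | h0
              · exact ⟨0, by simp [h0]⟩
              · exact ⟨1, by simp [h0]⟩⟩
          refine ⟨by rw [hfr, hd1], hc0, ?_, ?_⟩
          · apply (Submodule.eq_bot_iff _).mpr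
            intro w hw
            obtain ⟨ha, hb⟩ := (hradmem w).mp hw
            rcases hall w.2 with h0 | h0
            · rw [hpolar_left w ((0:F), f), h0, hzz, QuadraticMap.polar_zero_left,
                add_zero, QuadraticMap.polar_comm, hdc] at hb
              have hw1 : w.1 = 0 := by
                rcases smul_eq_zero.mp hb with h | h
                · exact h
                · exact absurd h hc0
              have := hdecomp w
              rw [h0, hw1, hzz] at this
              simpa using this
            · exfalso
              rw [hpolar_left w e₀, hps, smul_zero, zero_add, h0, hdc] at ha
              exact hc0 ha
          · exact Cardinal.mk_eq_two_iff.mpr ⟨0, 1, zero_ne_one, by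
              apply Set.eq_univ_of_forall
              intro z
              rcases hF z with rfl | rfl <;> simp⟩
      · rintro (⟨hc, hk⟩ | h1 | ⟨_, hc0, hk, _⟩)
        · refine ⟨hL.mpr ?_, fun w hw => (hspan w).mp (hk ▸ hw)⟩
          have he₀mem : e₀ ∈ LinearMap.ker Qt.polarBilin :=
            hk ▸ Submodule.mem_span_singleton_self e₀
          have hd0 : polar Qt ((0:F), f) e₀ = 0 := by
            rw [QuadraticMap.polar_comm]; exact (hrad e₀).mp he₀mem _
          rw [hd0, hc]
        · exact absurd h1 hfrne1
        · refine ⟨hL.mpr ?_, fun w hw => by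
            rw [hk, Submodule.mem_bot] at hw; rw [hw]; rfl⟩
          by_contra hdc
          have hc1 : Qt e₀ = 1 := (hF (Qt e₀)).resolve_left hc0
          have hd0 : polar Qt ((0:F), f) e₀ = 0 := by
            rcases hF (polar Qt ((0:F), f) e₀) with h | h
            · exact h
            · exact absurd (h.trans hc1.symm) hdc
          have hmem2 : ((0:F), f) ∈ LinearMap.ker Qt.polarBilin :=
            (hradmem _).mpr ⟨hd0, hpff⟩
          rw [hk, Submodule.mem_bot] at hmem2
          exact hf (congrArg Prod.snd hmem2)
  · -- |F| > 2
    push_neg at hF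
    obtain ⟨u, hu0, hu1⟩ := hF
    constructor
    · rintro ⟨h1, h2⟩
      left
      obtain ⟨f, hf⟩ := hexf
      have hc1 := h1 ((0:F), f) 1 (by simpa)
      have hcu := h1 ((0:F), f) u (by simpa)
      have hp0 : polar Qt ((0:F), f) e₀ = Qt e₀ := by
        simp only [one_pow, one_mul] at hc1
        exact hc1.symm
      have hc0 : Qt e₀ = 0 := by
        rw [hp0] at hcu
        have h' : u * (u * Qt e₀) = u * Qt e₀ := by linear_combination hcu
        have h'' : u * Qt e₀ = Qt e₀ := mul_left_cancel₀ hu0 h'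
        have h3 : (u - 1) * Qt e₀ = 0 := by linear_combination h''
        rcases mul_eq_zero.mp h3 with h | h
        · exact absurd (by linear_combination h : u = 1) hu1
        · exact h
      refine ⟨hc0, hradeq (hext fun w hw => ?_) h2⟩
      have := h1 w 1 hw
      simp only [one_pow, one_mul] at this
      rw [hc0] at this
      exact this.symm
    · rintro (⟨hc, hk⟩ | h1 | ⟨_, _, _, hF2⟩)
      · obtain ⟨ha, hb⟩ := hcasei hc hk
        exact ⟨hP.mp ha, hb⟩
      · exact absurd h1 hfrne1
      · exfalso
        obtain ⟨x, y, hxy, huniv⟩ := Cardinal.mk_eq_two_iff.mp hF2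
        have m : ∀ z : F, z = x ∨ z = y := fun z => by
          have : z ∈ ({x, y} : Set F) := huniv ▸ Set.mem_univ z
          simpa using this
        rcases m 0 with h0 | h0 <;> rcases m 1 with h1' | h1' <;>
          rcases m u with hu' | hu' <;> simp_all
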